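/- Let d = d_{2m+2}(1,…,1) be the real oscillator algebra with basis δ, e₁,…,e_{2m}, z and brackets [e_{2i-1},e_{2i}] = z, [δ,e_{2i-1}] = e_{2i}, [δ,e_{2i}] = -e_{2i-1} (all others zero). Every symmetric invariant nondegenerate bilinear form b on d satisfies: b(δ,z) = s ≠ 0, b(e_i,e_j) = s·δ_{ij}, b(δ,e_i) = 0, b(z,e_i) = 0, b(z,z) = 0, for some s ≠ 0 and arbitrary t = b(δ,δ). In particular, the space of symmetric invariant bilinear forms on d is 2-dimensional. -/

import Mathlib

set_option synthInstance.maxHeartbeats 1000000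
set_option maxHeartbeats 1000000


set_option synthInstance.maxHeartbeats 1000000
set_option maxHeartbeats 1000000

section Aux

variable {L : Type*} [LieRing L] [LieAlgebra ℝ L]

lemma skew' (x y : L) : ⁅x, y⁆ = -⁅y, x⁆ := (lie_skew x y).symm

lemma flip_app {V : Type*} [AddCommGroup V] [Module ℝ V] (B : LinearMap.BilinForm ℝ V)
    (x y : V) : B.flip x y = B y x := rfl

lemma inv_of_basis {ι : Type*} (b : Module.Basis ι ℝ L) (B : LinearMap.BilinForm ℝ L)
    (h : ∀ i j k, B ⁅b i, b j⁆ (b k) = B (b i) ⁅b j, b k⁆) :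
    ∀ u v w : L, B ⁅u, v⁆ w = B u ⁅v, w⁆ := by
  have hw : ∀ (i j : ι) (w : L), B ⁅b i, b j⁆ w = B (b i) ⁅b j, w⁆ := by
    intro i j w
    have : B ⁅b i, b j⁆ = (B (b i)) ∘ₗ (LieAlgebra.ad ℝ L (b j)) :=
      b.ext fun k => by simpa [LieAlgebra.ad_apply] using h i j k
    simpa [LieAlgebra.ad_apply] using congrFun (congrArg DFunLike.coe this) w
  have hv : ∀ (i : ι) (v w : L), B ⁅b i, v⁆ w = B (b i) ⁅v, w⁆ := by
    intro i v w
    have key : (B.flip w) ∘ₗ (LieAlgebra.ad ℝ L (b i)) =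
        -((B (b i)) ∘ₗ (LieAlgebra.ad ℝ L w)) :=
      b.ext fun j => by
        simp only [LinearMap.comp_apply, LinearMap.neg_apply, LieAlgebra.ad_apply, flip_app]
        rw [hw i j w, skew' (b j) w, map_neg]
    have h2 := congrFun (congrArg DFunLike.coe key) v
    simp only [LinearMap.comp_apply, LinearMap.neg_apply, LieAlgebra.ad_apply, flip_app] at h2
    rw [h2, skew' v w, map_neg]
  intro u v w
  have key : -((B.flip w) ∘ₗ (LieAlgebra.ad ℝ L v)) = B.flip ⁅v, w⁆ :=
    b.ext fun i => by
      simp only [LinearMap.comp_apply, LinearMap.neg_apply, LieAlgebra.ad_apply, flip_app]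
      rw [← hv i v w, skew' (b i) v, map_neg, LinearMap.neg_apply]
  have h2 := congrFun (congrArg DFunLike.coe key) u
  simp only [LinearMap.comp_apply, LinearMap.neg_apply, LieAlgebra.ad_apply, flip_app] at h2
  rw [← h2, skew' u v, map_neg, LinearMap.neg_apply]

lemma symm_of_basis {ι : Type*} (b : Module.Basis ι ℝ L) (B : LinearMap.BilinForm ℝ L)
    (h : ∀ i j, B (b i) (b j) = B (b j) (b i)) :
    ∀ u v : L, B u v = B v u := by
  have key : B = B.flip := b.ext fun i => b.ext fun j => by rw [flip_app]; exact h i j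
  intro u v
  have h2 : B u = B.flip u := congrFun (congrArg DFunLike.coe key) u
  rw [congrFun (congrArg DFunLike.coe h2) v, flip_app]

lemma toLin2_basis {ι : Type*} [Fintype ι] [DecidableEq ι] (b : Module.Basis ι ℝ L)
    (M : Matrix ι ι ℝ) (p q : ι) :
    Matrix.toLinearMap₂ b b M (b p) (b q) = M p q := by
  simp [Matrix.toLinearMap₂_apply, Module.Basis.repr_self, Finsupp.single_apply,
    Finset.sum_ite_eq, ite_smul]

end Aux

set_option linter.unusedSectionVars false

section Vals

variable {L : Type*} [LieRing L] [LieAlgebra ℝ L] {m : ℕ}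

lemma osc_vals (b : Module.Basis (Unit ⊕ Fin m ⊕ Fin m ⊕ Unit) ℝ L)
    (hxy : ∀ i j : Fin m, ⁅b (Sum.inr (Sum.inl i)), b (Sum.inr (Sum.inr (Sum.inl j)))⁆ =
      if i = j then b (Sum.inr (Sum.inr (Sum.inr ()))) else 0)
    (hxx : ∀ i j : Fin m, ⁅b (Sum.inr (Sum.inl i)), b (Sum.inr (Sum.inl j))⁆ = 0)
    (hyy : ∀ i j : Fin m,
      ⁅b (Sum.inr (Sum.inr (Sum.inl i))), b (Sum.inr (Sum.inr (Sum.inl j)))⁆ = 0)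
    (hδx : ∀ i : Fin m, ⁅b (Sum.inl ()), b (Sum.inr (Sum.inl i))⁆ =
      b (Sum.inr (Sum.inr (Sum.inl i))))
    (hδy : ∀ i : Fin m, ⁅b (Sum.inl ()), b (Sum.inr (Sum.inr (Sum.inl i)))⁆ =
      - b (Sum.inr (Sum.inl i)))
    (hyz : ∀ i : Fin m,
      ⁅b (Sum.inr (Sum.inr (Sum.inl i))), b (Sum.inr (Sum.inr (Sum.inr ())))⁆ = 0)
    (bf : LinearMap.BilinForm ℝ L)
    (hsym : ∀ u v : L, bf u v = bf v u)
    (hinv : ∀ u v w : L, bf ⁅u, v⁆ w = bf u ⁅v, w⁆) :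
    (∀ i j : Fin m, bf (b (Sum.inr (Sum.inl i))) (b (Sum.inr (Sum.inl j))) =
      if i = j then bf (b (Sum.inl ())) (b (Sum.inr (Sum.inr (Sum.inr ())))) else 0) ∧
    (∀ i j : Fin m, bf (b (Sum.inr (Sum.inr (Sum.inl i)))) (b (Sum.inr (Sum.inr (Sum.inl j)))) =
      if i = j then bf (b (Sum.inl ())) (b (Sum.inr (Sum.inr (Sum.inr ())))) else 0) ∧
    (∀ i j : Fin m, bf (b (Sum.inr (Sum.inl i))) (b (Sum.inr (Sum.inr (Sum.inl j)))) = 0) ∧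
    (∀ i : Fin m, bf (b (Sum.inl ())) (b (Sum.inr (Sum.inl i))) = 0) ∧
    (∀ i : Fin m, bf (b (Sum.inl ())) (b (Sum.inr (Sum.inr (Sum.inl i)))) = 0) ∧
    (∀ i : Fin m, bf (b (Sum.inr (Sum.inr (Sum.inr ())))) (b (Sum.inr (Sum.inl i))) = 0) ∧
    (∀ i : Fin m, bf (b (Sum.inr (Sum.inr (Sum.inr ()))))
      (b (Sum.inr (Sum.inr (Sum.inl i)))) = 0) ∧
    (1 ≤ m → bf (b (Sum.inr (Sum.inr (Sum.inr ()))))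
      (b (Sum.inr (Sum.inr (Sum.inr ())))) = 0) := by
  set δ := b (Sum.inl ()) with hδdef
  set Z := b (Sum.inr (Sum.inr (Sum.inr ()))) with hZdef
  set X : Fin m → L := fun i => b (Sum.inr (Sum.inl i)) with hXdef
  set Y : Fin m → L := fun i => b (Sum.inr (Sum.inr (Sum.inl i))) with hYdef
  have hYX : ∀ i j, bf (Y i) (X j) = 0 := by
    intro i j
    have h := hinv δ (X i) (X j)
    rw [hδx i, hxx i j] at h
    simpa using h
  have hXX : ∀ i j, bf (X i) (X j) = if i = j then bf δ Z else 0 := by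
    intro i j
    have h := hinv δ (Y i) (X j)
    have hb : ⁅Y i, X j⁆ = -(if j = i then Z else 0) := by rw [skew' (Y i) (X j), hxy j i]
    rw [hδy i, hb, map_neg, LinearMap.neg_apply, map_neg, neg_inj] at h
    by_cases hij : i = j
    · subst hij; simpa using h
    · rw [if_neg fun e => hij e.symm] at h; simpa [hij] using h
  have hYY : ∀ i j, bf (Y i) (Y j) = if i = j then bf δ Z else 0 := by
    intro i j
    have h := hinv δ (X i) (Y j)
    rw [hδx i, hxy i j] at h
    by_cases hij : i = j
    · subst hij; simpa using h
    · rw [if_neg hij] at h; simpa [hij] using h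
  have hZX : ∀ j, bf Z (X j) = 0 := by
    intro j
    have h := hinv (X j) (Y j) (X j)
    have hb : ⁅Y j, X j⁆ = -Z := by rw [skew' (Y j) (X j), hxy j j, if_pos rfl]
    rw [hxy j j, if_pos rfl, hb, map_neg] at h
    have h2 : bf (X j) Z = bf Z (X j) := hsym _ _
    linarith [h, h2]
  have hZY : ∀ j, bf Z (Y j) = 0 := by
    intro j
    have h := hinv (X j) (Y j) (Y j)
    rw [hxy j j, if_pos rfl, hyy j j] at h
    simpa using h
  have hZZ : 1 ≤ m → bf Z Z = 0 := by
    intro hm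
    have h := hinv (X ⟨0, hm⟩) (Y ⟨0, hm⟩) Z
    rw [hxy _ _, if_pos rfl, hyz] at h
    simpa using h
  have hδX : ∀ j, bf δ (X j) = 0 := by
    intro j
    have h := hinv δ (Y j) δ
    have hb : ⁅Y j, δ⁆ = X j := by rw [skew' (Y j) δ, hδy j, neg_neg]
    rw [hδy j, hb, map_neg, LinearMap.neg_apply] at h
    have h2 : bf (X j) δ = bf δ (X j) := hsym _ _
    linarith [h, h2]
  have hδY : ∀ j, bf δ (Y j) = 0 := by
    intro j
    have h := hinv δ (X j) δ
    have hb : ⁅X j, δ⁆ = -Y j := by rw [skew' (X j) δ, hδx j]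
    rw [hδx j, hb, map_neg] at h
    have h2 : bf (Y j) δ = bf δ (Y j) := hsym _ _
    linarith [h, h2]
  exact ⟨hXX, hYY, fun i j => (hsym _ _).trans (hYX j i), hδX, hδY, hZX, hZY, hZZ⟩

end Vals




def D1 (m : ℕ) : (Unit ⊕ Fin m ⊕ Fin m ⊕ Unit) → (Unit ⊕ Fin m ⊕ Fin m ⊕ Unit) → ℝ
  | Sum.inl _, Sum.inr (Sum.inr (Sum.inr _)) => 1
  | Sum.inr (Sum.inr (Sum.inr _)), Sum.inl _ => 1
  | Sum.inr (Sum.inl i), Sum.inr (Sum.inl j) => if i = j then 1 else 0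
  | Sum.inr (Sum.inr (Sum.inl i)), Sum.inr (Sum.inr (Sum.inl j)) => if i = j then 1 else 0
  | _, _ => 0

def D2 (m : ℕ) : (Unit ⊕ Fin m ⊕ Fin m ⊕ Unit) → (Unit ⊕ Fin m ⊕ Fin m ⊕ Unit) → ℝ
  | Sum.inl _, Sum.inl _ => 1
  | _, _ => 0




lemma inv_check1 {L : Type*} [LieRing L] [LieAlgebra ℝ L] {m : ℕ}
    (b : Module.Basis (Unit ⊕ Fin m ⊕ Fin m ⊕ Unit) ℝ L)
    (hxy : ∀ i j : Fin m, ⁅b (Sum.inr (Sum.inl i)), b (Sum.inr (Sum.inr (Sum.inl j)))⁆ =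
      if i = j then b (Sum.inr (Sum.inr (Sum.inr ()))) else 0)
    (hxx : ∀ i j : Fin m, ⁅b (Sum.inr (Sum.inl i)), b (Sum.inr (Sum.inl j))⁆ = 0)
    (hyy : ∀ i j : Fin m,
      ⁅b (Sum.inr (Sum.inr (Sum.inl i))), b (Sum.inr (Sum.inr (Sum.inl j)))⁆ = 0)
    (hδx : ∀ i : Fin m, ⁅b (Sum.inl ()), b (Sum.inr (Sum.inl i))⁆ =
      b (Sum.inr (Sum.inr (Sum.inl i))))
    (hδy : ∀ i : Fin m, ⁅b (Sum.inl ()), b (Sum.inr (Sum.inr (Sum.inl i)))⁆ =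
      - b (Sum.inr (Sum.inl i)))
    (hδz : ⁅b (Sum.inl ()), b (Sum.inr (Sum.inr (Sum.inr ())))⁆ = 0)
    (hxz : ∀ i : Fin m, ⁅b (Sum.inr (Sum.inl i)), b (Sum.inr (Sum.inr (Sum.inr ())))⁆ = 0)
    (hyz : ∀ i : Fin m,
      ⁅b (Sum.inr (Sum.inr (Sum.inl i))), b (Sum.inr (Sum.inr (Sum.inr ())))⁆ = 0)
    (B : LinearMap.BilinForm ℝ L)
    (hv : ∀ p q, B (b p) (b q) = D1 m p q) :
    ∀ p q r, B ⁅b p, b q⁆ (b r) = B (b p) ⁅b q, b r⁆ := by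
  have hxyS : ∀ i j : Fin m, ⁅b (Sum.inr (Sum.inl i)), b (Sum.inr (Sum.inr (Sum.inl j)))⁆ =
      (if i = j then (1:ℝ) else 0) • b (Sum.inr (Sum.inr (Sum.inr ()))) := fun i j => by
    rw [hxy i j]; by_cases h : i = j <;> simp [h]
  have hyxS : ∀ i j : Fin m, ⁅b (Sum.inr (Sum.inr (Sum.inl i))), b (Sum.inr (Sum.inl j))⁆ =
      (if i = j then (-1:ℝ) else 0) • b (Sum.inr (Sum.inr (Sum.inr ()))) := fun i j => by
    rw [skew', hxy j i]; by_cases h : i = j <;> simp [h, eq_comm]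
  have hxδ : ∀ i : Fin m, ⁅b (Sum.inr (Sum.inl i)), b (Sum.inl ())⁆ =
      -(b (Sum.inr (Sum.inr (Sum.inl i)))) := fun i => by rw [skew', hδx i]
  have hyδ : ∀ i : Fin m, ⁅b (Sum.inr (Sum.inr (Sum.inl i))), b (Sum.inl ())⁆ =
      b (Sum.inr (Sum.inl i)) := fun i => by rw [skew', hδy i, neg_neg]
  have hzδ : ⁅b (Sum.inr (Sum.inr (Sum.inr ()))), b (Sum.inl ())⁆ = 0 := by
    rw [skew', hδz, neg_zero]
  have hzx : ∀ i : Fin m, ⁅b (Sum.inr (Sum.inr (Sum.inr ()))), b (Sum.inr (Sum.inl i))⁆ = 0 :=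
    fun i => by rw [skew', hxz i, neg_zero]
  have hzy : ∀ i : Fin m,
      ⁅b (Sum.inr (Sum.inr (Sum.inr ()))), b (Sum.inr (Sum.inr (Sum.inl i)))⁆ = 0 :=
    fun i => by rw [skew', hyz i, neg_zero]
  intro p q r
  rcases p with ⟨⟩ | p | p | ⟨⟩ <;> rcases q with ⟨⟩ | q | q | ⟨⟩ <;>
    rcases r with ⟨⟩ | r | r | ⟨⟩ <;>
    simp only [lie_self, hxyS, hyxS, hxx, hyy, hδx, hδy, hδz, hxz, hyz, hxδ, hyδ, hzδ,
      hzx, hzy, map_smul, LinearMap.smul_apply, map_zero, LinearMap.zero_apply, map_neg,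
      LinearMap.neg_apply, hv, smul_eq_mul, D1, mul_zero, zero_mul, mul_one, mul_neg,
      neg_zero, neg_neg] <;>
    (first | rfl | (split_ifs <;> norm_num))

lemma inv_check2 {L : Type*} [LieRing L] [LieAlgebra ℝ L] {m : ℕ}
    (b : Module.Basis (Unit ⊕ Fin m ⊕ Fin m ⊕ Unit) ℝ L)
    (hxy : ∀ i j : Fin m, ⁅b (Sum.inr (Sum.inl i)), b (Sum.inr (Sum.inr (Sum.inl j)))⁆ =
      if i = j then b (Sum.inr (Sum.inr (Sum.inr ()))) else 0)
    (hxx : ∀ i j : Fin m, ⁅b (Sum.inr (Sum.inl i)), b (Sum.inr (Sum.inl j))⁆ = 0)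
    (hyy : ∀ i j : Fin m,
      ⁅b (Sum.inr (Sum.inr (Sum.inl i))), b (Sum.inr (Sum.inr (Sum.inl j)))⁆ = 0)
    (hδx : ∀ i : Fin m, ⁅b (Sum.inl ()), b (Sum.inr (Sum.inl i))⁆ =
      b (Sum.inr (Sum.inr (Sum.inl i))))
    (hδy : ∀ i : Fin m, ⁅b (Sum.inl ()), b (Sum.inr (Sum.inr (Sum.inl i)))⁆ =
      - b (Sum.inr (Sum.inl i)))
    (hδz : ⁅b (Sum.inl ()), b (Sum.inr (Sum.inr (Sum.inr ())))⁆ = 0)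
    (hxz : ∀ i : Fin m, ⁅b (Sum.inr (Sum.inl i)), b (Sum.inr (Sum.inr (Sum.inr ())))⁆ = 0)
    (hyz : ∀ i : Fin m,
      ⁅b (Sum.inr (Sum.inr (Sum.inl i))), b (Sum.inr (Sum.inr (Sum.inr ())))⁆ = 0)
    (B : LinearMap.BilinForm ℝ L)
    (hv : ∀ p q, B (b p) (b q) = D2 m p q) :
    ∀ p q r, B ⁅b p, b q⁆ (b r) = B (b p) ⁅b q, b r⁆ := by
  have hxyS : ∀ i j : Fin m, ⁅b (Sum.inr (Sum.inl i)), b (Sum.inr (Sum.inr (Sum.inl j)))⁆ =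
      (if i = j then (1:ℝ) else 0) • b (Sum.inr (Sum.inr (Sum.inr ()))) := fun i j => by
    rw [hxy i j]; by_cases h : i = j <;> simp [h]
  have hyxS : ∀ i j : Fin m, ⁅b (Sum.inr (Sum.inr (Sum.inl i))), b (Sum.inr (Sum.inl j))⁆ =
      (if i = j then (-1:ℝ) else 0) • b (Sum.inr (Sum.inr (Sum.inr ()))) := fun i j => by
    rw [skew', hxy j i]; by_cases h : i = j <;> simp [h, eq_comm]
  have hxδ : ∀ i : Fin m, ⁅b (Sum.inr (Sum.inl i)), b (Sum.inl ())⁆ =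
      -(b (Sum.inr (Sum.inr (Sum.inl i)))) := fun i => by rw [skew', hδx i]
  have hyδ : ∀ i : Fin m, ⁅b (Sum.inr (Sum.inr (Sum.inl i))), b (Sum.inl ())⁆ =
      b (Sum.inr (Sum.inl i)) := fun i => by rw [skew', hδy i, neg_neg]
  have hzδ : ⁅b (Sum.inr (Sum.inr (Sum.inr ()))), b (Sum.inl ())⁆ = 0 := by
    rw [skew', hδz, neg_zero]
  have hzx : ∀ i : Fin m, ⁅b (Sum.inr (Sum.inr (Sum.inr ()))), b (Sum.inr (Sum.inl i))⁆ = 0 :=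
    fun i => by rw [skew', hxz i, neg_zero]
  have hzy : ∀ i : Fin m,
      ⁅b (Sum.inr (Sum.inr (Sum.inr ()))), b (Sum.inr (Sum.inr (Sum.inl i)))⁆ = 0 :=
    fun i => by rw [skew', hyz i, neg_zero]
  intro p q r
  rcases p with ⟨⟩ | p | p | ⟨⟩ <;> rcases q with ⟨⟩ | q | q | ⟨⟩ <;>
    rcases r with ⟨⟩ | r | r | ⟨⟩ <;>
    simp only [lie_self, hxyS, hyxS, hxx, hyy, hδx, hδy, hδz, hxz, hyz, hxδ, hyδ, hzδ,
      hzx, hzy, map_smul, LinearMap.smul_apply, map_zero, LinearMap.zero_apply, map_neg,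
      LinearMap.neg_apply, hv, smul_eq_mul, D2, mul_zero, zero_mul, mul_one, mul_neg,
      neg_zero, neg_neg] <;>
    (first | rfl | (split_ifs <;> norm_num))


lemma D1symm {m : ℕ} (p q : Unit ⊕ Fin m ⊕ Fin m ⊕ Unit) : D1 m p q = D1 m q p := by
  rcases p with ⟨⟩ | p | p | ⟨⟩ <;> rcases q with ⟨⟩ | q | q | ⟨⟩ <;> simp [D1, eq_comm]

lemma D2symm {m : ℕ} (p q : Unit ⊕ Fin m ⊕ Fin m ⊕ Unit) : D2 m p q = D2 m q p := by
  rcases p with ⟨⟩ | p | p | ⟨⟩ <;> rcases q with ⟨⟩ | q | q | ⟨⟩ <;> simp [D2]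

lemma sym_check {L : Type*} [LieRing L] [LieAlgebra ℝ L] {m : ℕ}
    (b : Module.Basis (Unit ⊕ Fin m ⊕ Fin m ⊕ Unit) ℝ L)
    (D : (Unit ⊕ Fin m ⊕ Fin m ⊕ Unit) → (Unit ⊕ Fin m ⊕ Fin m ⊕ Unit) → ℝ)
    (hD : ∀ p q, D p q = D q p)
    (B : LinearMap.BilinForm ℝ L) (hv : ∀ p q, B (b p) (b q) = D p q) :
    ∀ u v : L, B u v = B v u :=
  symm_of_basis b B fun p q => by rw [hv, hv, hD]

lemma indep_check {L : Type*} [LieRing L] [LieAlgebra ℝ L] {m : ℕ}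
    (b : Module.Basis (Unit ⊕ Fin m ⊕ Fin m ⊕ Unit) ℝ L)
    (b1 b2 : LinearMap.BilinForm ℝ L)
    (hb1v : ∀ p q, b1 (b p) (b q) = D1 m p q)
    (hb2v : ∀ p q, b2 (b p) (b q) = D2 m p q) :
    LinearIndependent ℝ ![b1, b2] := by
  apply (LinearIndependent.pair_iff (R := ℝ) (M := LinearMap.BilinForm ℝ L)
    (x := b1) (y := b2)).mpr
  intro s t hst
  have h1 := congrFun (congrArg DFunLike.coe (congrFun (congrArg DFunLike.coe hst)
    (b (Sum.inl ())))) (b (Sum.inr (Sum.inr (Sum.inr ()))))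
  have h2 := congrFun (congrArg DFunLike.coe (congrFun (congrArg DFunLike.coe hst)
    (b (Sum.inl ())))) (b (Sum.inl ()))
  simp only [LinearMap.add_apply, LinearMap.smul_apply, smul_eq_mul,
    LinearMap.zero_apply, hb1v, hb2v] at h1 h2
  simp [D1, D2] at h1 h2
  exact ⟨h1, h2⟩

lemma nondeg_check {L : Type*} [LieRing L] [LieAlgebra ℝ L] {m : ℕ} (hm : 1 ≤ m)
    (b : Module.Basis (Unit ⊕ Fin m ⊕ Fin m ⊕ Unit) ℝ L)
    (hxy : ∀ i j : Fin m, ⁅b (Sum.inr (Sum.inl i)), b (Sum.inr (Sum.inr (Sum.inl j)))⁆ =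
      if i = j then b (Sum.inr (Sum.inr (Sum.inr ()))) else 0)
    (hxx : ∀ i j : Fin m, ⁅b (Sum.inr (Sum.inl i)), b (Sum.inr (Sum.inl j))⁆ = 0)
    (hyy : ∀ i j : Fin m,
      ⁅b (Sum.inr (Sum.inr (Sum.inl i))), b (Sum.inr (Sum.inr (Sum.inl j)))⁆ = 0)
    (hδx : ∀ i : Fin m, ⁅b (Sum.inl ()), b (Sum.inr (Sum.inl i))⁆ =
      b (Sum.inr (Sum.inr (Sum.inl i))))
    (hδy : ∀ i : Fin m, ⁅b (Sum.inl ()), b (Sum.inr (Sum.inr (Sum.inl i)))⁆ =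
      - b (Sum.inr (Sum.inl i)))
    (hδz : ⁅b (Sum.inl ()), b (Sum.inr (Sum.inr (Sum.inr ())))⁆ = 0)
    (hxz : ∀ i : Fin m, ⁅b (Sum.inr (Sum.inl i)), b (Sum.inr (Sum.inr (Sum.inr ())))⁆ = 0)
    (hyz : ∀ i : Fin m,
      ⁅b (Sum.inr (Sum.inr (Sum.inl i))), b (Sum.inr (Sum.inr (Sum.inr ())))⁆ = 0)
    (bf : LinearMap.BilinForm ℝ L)
    (hsym : ∀ u v : L, bf u v = bf v u)
    (hinv : ∀ u v w : L, bf ⁅u, v⁆ w = bf u ⁅v, w⁆)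
    (hnd : ∀ u : L, (∀ v : L, bf u v = 0) → u = 0) :
    bf (b (Sum.inl ())) (b (Sum.inr (Sum.inr (Sum.inr ())))) ≠ 0 := by
  obtain ⟨hXX, hYY, hXY, hδX, hδY, hZX, hZY, hZZ⟩ :=
    osc_vals b hxy hxx hyy hδx hδy hyz bf hsym hinv
  intro h0
  have hz0 : bf (b (Sum.inr (Sum.inr (Sum.inr ())))) = 0 := by
    apply b.ext
    intro p
    rcases p with ⟨⟩ | p | p | ⟨⟩
    · rw [LinearMap.zero_apply, hsym]; exact h0
    · rw [LinearMap.zero_apply]; exact hZX p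
    · rw [LinearMap.zero_apply]; exact hZY p
    · rw [LinearMap.zero_apply]; exact hZZ hm
  have : b (Sum.inr (Sum.inr (Sum.inr ()))) = 0 := by
    apply hnd
    intro v
    rw [hz0, LinearMap.zero_apply]
  exact b.ne_zero _ this

lemma span_check {L : Type*} [LieRing L] [LieAlgebra ℝ L] {m : ℕ} (hm : 1 ≤ m)
    (b : Module.Basis (Unit ⊕ Fin m ⊕ Fin m ⊕ Unit) ℝ L)
    (hxy : ∀ i j : Fin m, ⁅b (Sum.inr (Sum.inl i)), b (Sum.inr (Sum.inr (Sum.inl j)))⁆ =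
      if i = j then b (Sum.inr (Sum.inr (Sum.inr ()))) else 0)
    (hxx : ∀ i j : Fin m, ⁅b (Sum.inr (Sum.inl i)), b (Sum.inr (Sum.inl j))⁆ = 0)
    (hyy : ∀ i j : Fin m,
      ⁅b (Sum.inr (Sum.inr (Sum.inl i))), b (Sum.inr (Sum.inr (Sum.inl j)))⁆ = 0)
    (hδx : ∀ i : Fin m, ⁅b (Sum.inl ()), b (Sum.inr (Sum.inl i))⁆ =
      b (Sum.inr (Sum.inr (Sum.inl i))))
    (hδy : ∀ i : Fin m, ⁅b (Sum.inl ()), b (Sum.inr (Sum.inr (Sum.inl i)))⁆ =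
      - b (Sum.inr (Sum.inl i)))
    (hδz : ⁅b (Sum.inl ()), b (Sum.inr (Sum.inr (Sum.inr ())))⁆ = 0)
    (hxz : ∀ i : Fin m, ⁅b (Sum.inr (Sum.inl i)), b (Sum.inr (Sum.inr (Sum.inr ())))⁆ = 0)
    (hyz : ∀ i : Fin m,
      ⁅b (Sum.inr (Sum.inr (Sum.inl i))), b (Sum.inr (Sum.inr (Sum.inr ())))⁆ = 0)
    (b1 b2 : LinearMap.BilinForm ℝ L)
    (hb1v : ∀ p q, b1 (b p) (b q) = D1 m p q)
    (hb2v : ∀ p q, b2 (b p) (b q) = D2 m p q)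
    (bf : LinearMap.BilinForm ℝ L)
    (hsym : ∀ u v : L, bf u v = bf v u)
    (hinv : ∀ u v w : L, bf ⁅u, v⁆ w = bf u ⁅v, w⁆) :
    bf = bf (b (Sum.inl ())) (b (Sum.inr (Sum.inr (Sum.inr ())))) • b1 +
      bf (b (Sum.inl ())) (b (Sum.inl ())) • b2 := by
  obtain ⟨hXX, hYY, hXY, hδX, hδY, hZX, hZY, hZZ⟩ :=
    osc_vals b hxy hxx hyy hδx hδy hyz bf hsym hinv
  have hXδ2 : ∀ p : Fin m, bf (b (Sum.inr (Sum.inl p))) (b (Sum.inl ())) = 0 :=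
    fun p => (hsym _ _).trans (hδX p)
  have hYδ2 : ∀ p : Fin m, bf (b (Sum.inr (Sum.inr (Sum.inl p)))) (b (Sum.inl ())) = 0 :=
    fun p => (hsym _ _).trans (hδY p)
  have hYX2 : ∀ p q : Fin m,
      bf (b (Sum.inr (Sum.inr (Sum.inl p)))) (b (Sum.inr (Sum.inl q))) = 0 :=
    fun p q => (hsym _ _).trans (hXY q p)
  have hXZ2 : ∀ p : Fin m,
      bf (b (Sum.inr (Sum.inl p))) (b (Sum.inr (Sum.inr (Sum.inr ())))) = 0 :=
    fun p => (hsym _ _).trans (hZX p)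
  have hYZ2 : ∀ p : Fin m,
      bf (b (Sum.inr (Sum.inr (Sum.inl p)))) (b (Sum.inr (Sum.inr (Sum.inr ())))) = 0 :=
    fun p => (hsym _ _).trans (hZY p)
  have hZδ2 : bf (b (Sum.inr (Sum.inr (Sum.inr ())))) (b (Sum.inl ())) =
      bf (b (Sum.inl ())) (b (Sum.inr (Sum.inr (Sum.inr ())))) := hsym _ _
  apply b.ext
  intro p
  apply b.ext
  intro q
  have hrhs : (((bf (b (Sum.inl ())) (b (Sum.inr (Sum.inr (Sum.inr ())))) • b1 +
      bf (b (Sum.inl ())) (b (Sum.inl ())) • b2)) (b p)) (b q) =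
      bf (b (Sum.inl ())) (b (Sum.inr (Sum.inr (Sum.inr ())))) * D1 m p q +
      bf (b (Sum.inl ())) (b (Sum.inl ())) * D2 m p q := by
    simp [LinearMap.add_apply, LinearMap.smul_apply, smul_eq_mul, hb1v, hb2v]
  rw [hrhs]
  rcases p with ⟨⟩ | p | p | ⟨⟩ <;> rcases q with ⟨⟩ | q | q | ⟨⟩ <;>
    simp [D1, D2, hXX, hYY, hXY, hδX, hδY, hZX, hZY, hZZ hm, hXδ2, hYδ2, hYX2, hXZ2,
      hYZ2, hZδ2]

/-- every symmetric invariant nondegenerate bilinear form `bf`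
on the real oscillator algebra `d_{2m+2}(1,…,1)` (basis `δ, x₁,…,x_m,
y₁,…,y_m, z` with `[x_i,y_i] = z`, `[δ,x_i] = y_i`, `[δ,y_i] = -x_i`) is
determined by `s = bf(δ,z) ≠ 0` and `t = bf(δ,δ)`: `bf(e_i,e_j) = s·δᵢⱼ`,
all other pairings zero; and the space of symmetric invariant forms is
2-dimensional. -/
theorem stmt_18 {L : Type*} [LieRing L] [LieAlgebra ℝ L]
    (m : ℕ) (hm : 1 ≤ m)
    (b : Module.Basis (Unit ⊕ Fin m ⊕ Fin m ⊕ Unit) ℝ L)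
    -- notation: δ = b (.inl ()), xᵢ = b (.inr (.inl i)),
    -- yᵢ = b (.inr (.inr (.inl i))), z = b (.inr (.inr (.inr ())))
    (hxy : ∀ i j : Fin m, ⁅b (Sum.inr (Sum.inl i)), b (Sum.inr (Sum.inr (Sum.inl j)))⁆ =
      if i = j then b (Sum.inr (Sum.inr (Sum.inr ()))) else 0)
    (hxx : ∀ i j : Fin m, ⁅b (Sum.inr (Sum.inl i)), b (Sum.inr (Sum.inl j))⁆ = 0)
    (hyy : ∀ i j : Fin m,
      ⁅b (Sum.inr (Sum.inr (Sum.inl i))), b (Sum.inr (Sum.inr (Sum.inl j)))⁆ = 0)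
    (hδx : ∀ i : Fin m, ⁅b (Sum.inl ()), b (Sum.inr (Sum.inl i))⁆ =
      b (Sum.inr (Sum.inr (Sum.inl i))))
    (hδy : ∀ i : Fin m, ⁅b (Sum.inl ()), b (Sum.inr (Sum.inr (Sum.inl i)))⁆ =
      - b (Sum.inr (Sum.inl i)))
    (hδz : ⁅b (Sum.inl ()), b (Sum.inr (Sum.inr (Sum.inr ())))⁆ = 0)
    (hxz : ∀ i : Fin m, ⁅b (Sum.inr (Sum.inl i)), b (Sum.inr (Sum.inr (Sum.inr ())))⁆ = 0)
    (hyz : ∀ i : Fin m,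
      ⁅b (Sum.inr (Sum.inr (Sum.inl i))), b (Sum.inr (Sum.inr (Sum.inr ())))⁆ = 0) :
    (∀ bf : LinearMap.BilinForm ℝ L,
      (∀ u v : L, bf u v = bf v u) →
      (∀ u v w : L, bf ⁅u, v⁆ w = bf u ⁅v, w⁆) →
      (∀ u : L, (∀ v : L, bf u v = 0) → u = 0) →
      bf (b (Sum.inl ())) (b (Sum.inr (Sum.inr (Sum.inr ())))) ≠ 0 ∧
      (∀ i j : Fin m, bf (b (Sum.inr (Sum.inl i))) (b (Sum.inr (Sum.inl j))) =
        if i = j then bf (b (Sum.inl ())) (b (Sum.inr (Sum.inr (Sum.inr ())))) else 0) ∧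
      (∀ i j : Fin m, bf (b (Sum.inr (Sum.inr (Sum.inl i))))
          (b (Sum.inr (Sum.inr (Sum.inl j)))) =
        if i = j then bf (b (Sum.inl ())) (b (Sum.inr (Sum.inr (Sum.inr ())))) else 0) ∧
      (∀ i j : Fin m,
        bf (b (Sum.inr (Sum.inl i))) (b (Sum.inr (Sum.inr (Sum.inl j)))) = 0) ∧
      (∀ i : Fin m, bf (b (Sum.inl ())) (b (Sum.inr (Sum.inl i))) = 0) ∧
      (∀ i : Fin m, bf (b (Sum.inl ())) (b (Sum.inr (Sum.inr (Sum.inl i)))) = 0) ∧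
      (∀ i : Fin m,
        bf (b (Sum.inr (Sum.inr (Sum.inr ())))) (b (Sum.inr (Sum.inl i))) = 0) ∧
      (∀ i : Fin m,
        bf (b (Sum.inr (Sum.inr (Sum.inr ())))) (b (Sum.inr (Sum.inr (Sum.inl i)))) = 0) ∧
      bf (b (Sum.inr (Sum.inr (Sum.inr ()))))
        (b (Sum.inr (Sum.inr (Sum.inr ())))) = 0) ∧
    (∃ b1 b2 : LinearMap.BilinForm ℝ L,
      (∀ u v : L, b1 u v = b1 v u) ∧ (∀ u v w : L, b1 ⁅u, v⁆ w = b1 u ⁅v, w⁆) ∧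
      (∀ u v : L, b2 u v = b2 v u) ∧ (∀ u v w : L, b2 ⁅u, v⁆ w = b2 u ⁅v, w⁆) ∧
      LinearIndependent ℝ ![b1, b2] ∧
      ∀ bf : LinearMap.BilinForm ℝ L,
        (∀ u v : L, bf u v = bf v u) → (∀ u v w : L, bf ⁅u, v⁆ w = bf u ⁅v, w⁆) →
        ∃ s t : ℝ, bf = s • b1 + t • b2) := by

  classical
  obtain ⟨b1, hb1v⟩ : ∃ B : LinearMap.BilinForm ℝ L, ∀ p q, B (b p) (b q) = D1 m p q :=
    ⟨Matrix.toLinearMap₂ b b (Matrix.of (D1 m)), fun p q => toLin2_basis b _ p q⟩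
  obtain ⟨b2, hb2v⟩ : ∃ B : LinearMap.BilinForm ℝ L, ∀ p q, B (b p) (b q) = D2 m p q :=
    ⟨Matrix.toLinearMap₂ b b (Matrix.of (D2 m)), fun p q => toLin2_basis b _ p q⟩
  constructor
  · intro bf hsym hinv hnd
    obtain ⟨hXX, hYY, hXY, hδX, hδY, hZX, hZY, hZZ⟩ :=
      osc_vals b hxy hxx hyy hδx hδy hyz bf hsym hinv
    exact ⟨nondeg_check hm b hxy hxx hyy hδx hδy hδz hxz hyz bf hsym hinv hnd,
      hXX, hYY, hXY, hδX, hδY, hZX, hZY, hZZ hm⟩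
  · exact ⟨b1, b2,
      sym_check b (D1 m) D1symm b1 hb1v,
      inv_of_basis b b1 (inv_check1 b hxy hxx hyy hδx hδy hδz hxz hyz b1 hb1v),
      sym_check b (D2 m) D2symm b2 hb2v,
      inv_of_basis b b2 (inv_check2 b hxy hxx hyy hδx hδy hδz hxz hyz b2 hb2v),
      indep_check b b1 b2 hb1v hb2v,
      fun bf hsym hinv => ⟨bf (b (Sum.inl ())) (b (Sum.inr (Sum.inr (Sum.inr ())))),
        bf (b (Sum.inl ())) (b (Sum.inl ())),
        span_check hm b hxy hxx hyy hδx hδy hδz hxz hyz b1 b2 hb1v hb2v bf hsym hinv⟩⟩
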